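/- The symplectic group Sp(4,𝔽₂), i.e. the group of 4×4 matrices h over the field 𝔽₂ with two elements satisfying hᵀ J̄ h = J̄, where J̄ is the matrix over 𝔽₂ with rows (0,0,1,0), (0,0,0,1), (1,0,0,0), (0,1,0,0), is isomorphic to the symmetric group S₆ on six letters. -/

import Mathlib

open Matrix

/-- The subgroup of `GL(4,R)` preserving the bilinear form given by the matrix `A`,
i.e. matrices `g` with `gᵀ A g = A`. -/
def symplOf {R : Type*} [CommRing R] (A : Matrix (Fin 4) (Fin 4) R) :
    Subgroup (GL (Fin 4) R) where
  carrier := {g | (g : Matrix (Fin 4) (Fin 4) R)ᵀ * A * (g : Matrix (Fin 4) (Fin 4) R) = A}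
  one_mem' := by simp
  mul_mem' := by
    intro a b ha hb
    simp only [Set.mem_setOf_eq] at ha hb ⊢
    rw [Units.val_mul, transpose_mul]
    calc (b : Matrix (Fin 4) (Fin 4) R)ᵀ * (a : Matrix (Fin 4) (Fin 4) R)ᵀ * A *
          ((a : Matrix (Fin 4) (Fin 4) R) * (b : Matrix (Fin 4) (Fin 4) R))
        = (b : Matrix (Fin 4) (Fin 4) R)ᵀ *
            ((a : Matrix (Fin 4) (Fin 4) R)ᵀ * A * (a : Matrix (Fin 4) (Fin 4) R)) *
            (b : Matrix (Fin 4) (Fin 4) R) := by noncomm_ring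
      _ = A := by rw [ha, hb]
  inv_mem' := by
    intro a ha
    simp only [Set.mem_setOf_eq] at ha ⊢
    have h1 : ((a : Matrix (Fin 4) (Fin 4) R) * ((a⁻¹ : GL (Fin 4) R) : Matrix (Fin 4) (Fin 4) R)) = 1 :=
      Units.mul_inv a
    calc ((a⁻¹ : GL (Fin 4) R) : Matrix (Fin 4) (Fin 4) R)ᵀ * A *
          ((a⁻¹ : GL (Fin 4) R) : Matrix (Fin 4) (Fin 4) R)
        = ((a⁻¹ : GL (Fin 4) R) : Matrix (Fin 4) (Fin 4) R)ᵀ *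
            ((a : Matrix (Fin 4) (Fin 4) R)ᵀ * A * (a : Matrix (Fin 4) (Fin 4) R)) *
            ((a⁻¹ : GL (Fin 4) R) : Matrix (Fin 4) (Fin 4) R) := by rw [ha]
      _ = ((a : Matrix (Fin 4) (Fin 4) R) * ((a⁻¹ : GL (Fin 4) R) : Matrix (Fin 4) (Fin 4) R))ᵀ * A *
            ((a : Matrix (Fin 4) (Fin 4) R) * ((a⁻¹ : GL (Fin 4) R) : Matrix (Fin 4) (Fin 4) R)) := by
          rw [transpose_mul]; noncomm_ring
      _ = A := by rw [h1]; simp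

/-- The reduction of the symplectic form modulo 2. -/
def JbarF2 : Matrix (Fin 4) (Fin 4) (ZMod 2) :=
  !![0, 0, 1, 0; 0, 0, 0, 1; 1, 0, 0, 0; 0, 1, 0, 0]

/-- `Sp(4,𝔽₂)`: the group of `4 × 4` matrices `h` over `𝔽₂` with `hᵀ J̄ h = J̄`. -/
def Sp4F2 : Subgroup (GL (Fin 4) (ZMod 2)) := symplOf JbarF2

set_option maxRecDepth 100000
set_option maxHeartbeats 16000000

abbrev V4' := Fin 4 → ZMod 2
abbrev V6' := Fin 6 → ZMod 2
def EmF (x : V4') : V6' := ![x 0 + x 3, x 2 + x 3, x 1 + x 3, x 1, 0, x 0 + x 2 + x 3]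
def RmF (u : V6') : V4' := ![u 1 + u 5, u 0 + u 1 + u 2 + u 5, u 0 + u 5, u 2 + u 3]
def B4 (u v : V4') : ZMod 2 := u 0 * v 2 + u 1 * v 3 + u 2 * v 0 + u 3 * v 1

lemma sumEm : ∀ x : V4', (∑ i, EmF x i) = 0 := by decide
lemma lemA : ∀ x : V4', RmF (EmF x) = x := by decide
lemma lemB : ∀ u : V6', (∑ i, u i) = 0 → EmF (RmF u) = fun i => u i + u 4 := by decide
lemma lemE : ∀ (v : V6') (c : ZMod 2), RmF (fun i => v i + c) = RmF v := by decide
lemma EmAdd : ∀ x y : V4', EmF (x + y) = EmF x + EmF y := by decide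
lemma RmAdd : ∀ u v : V6', RmF (u + v) = RmF u + RmF v := by decide
lemma lemC : ∀ x y : V4', (EmF x) ⬝ᵥ (EmF y) = B4 x y := by decide

lemma dotConst : ∀ (u v : V6') (a b : ZMod 2), (∑ i, u i) = 0 → (∑ i, v i) = 0 →
    (fun i => u i + a) ⬝ᵥ (fun i => v i + b) = u ⬝ᵥ v := by
  intro u v a b hu hv
  simp only [dotProduct, add_mul, mul_add, Finset.sum_add_distrib,
    ← Finset.sum_mul, ← Finset.mul_sum, hu, hv, Finset.sum_const]
  simp [show ((6:ℕ) : ZMod 2) = 0 from by decide]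
  exact Or.inl (Or.inl (by decide))

lemma mulVecJ : ∀ y : V4', JbarF2.mulVec y = ![y 2, y 3, y 0, y 1] := by decide

lemma lemJ : ∀ x y : V4', x ⬝ᵥ (JbarF2.mulVec y) = B4 x y := by
  intro x y
  rw [mulVecJ]
  simp [dotProduct, Fin.sum_univ_four, B4]

-- ===== the action of S₆ =====

/-- the induced action of a permutation on `𝔽₂⁴`. -/
def TF (σ : Equiv.Perm (Fin 6)) (x : V4') : V4' := RmF (fun i => EmF x (σ.symm i))

lemma sumComp (σ : Equiv.Perm (Fin 6)) (u : V6') (h : (∑ i, u i) = 0) :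
    (∑ i, u (σ.symm i)) = 0 := by
  rw [Equiv.sum_comp σ.symm u]; exact h

lemma Tone (x : V4') : TF 1 x = x := by
  unfold TF
  have : (fun i => EmF x ((1 : Equiv.Perm (Fin 6)).symm i)) = EmF x := by
    funext i; rfl
  rw [this]
  exact lemA x

lemma Tmul (σ τ : Equiv.Perm (Fin 6)) (x : V4') : TF (σ * τ) x = TF σ (TF τ x) := by
  have hw : (∑ i, EmF x (τ.symm i)) = 0 := sumComp τ _ (sumEm x)
  have h1 : TF σ (TF τ x) =
      RmF (fun i => EmF x (τ.symm (σ.symm i)) + EmF x (τ.symm 4)) := by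
    unfold TF
    rw [lemB _ hw]
  rw [h1, lemE (fun i => EmF x (τ.symm (σ.symm i))) (EmF x (τ.symm 4))]
  rfl

lemma Tzero (σ : Equiv.Perm (Fin 6)) : TF σ 0 = 0 := by
  unfold TF
  have : (fun i => EmF 0 (σ.symm i)) = (0 : V6') := by
    funext i; simp [show EmF 0 = 0 from by decide]
  rw [this, show RmF 0 = 0 from by decide]

lemma Tadd (σ : Equiv.Perm (Fin 6)) (x y : V4') : TF σ (x + y) = TF σ x + TF σ y := by
  unfold TF
  rw [← RmAdd]
  congr 1
  funext i
  rw [EmAdd]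
  rfl

lemma Tform (σ : Equiv.Perm (Fin 6)) (x y : V4') :
    B4 (TF σ x) (TF σ y) = B4 x y := by
  rw [← lemC, ← lemC x y]
  unfold TF
  have hx : (∑ i, EmF x (σ.symm i)) = 0 := sumComp σ _ (sumEm x)
  have hy : (∑ i, EmF y (σ.symm i)) = 0 := sumComp σ _ (sumEm y)
  rw [lemB _ hx, lemB _ hy, dotConst _ _ _ _ hx hy]
  show (∑ i, EmF x (σ.symm i) * EmF y (σ.symm i)) = _
  rw [Equiv.sum_comp σ.symm (fun i => EmF x i * EmF y i)]
  rfl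

/-- `TF σ` as a linear map. -/
def Tlin (σ : Equiv.Perm (Fin 6)) : V4' →ₗ[ZMod 2] V4' where
  toFun := TF σ
  map_add' := Tadd σ
  map_smul' := by
    intro c x
    rcases (by decide : ∀ c : ZMod 2, c = 0 ∨ c = 1) c with h | h <;> subst h
    · simp [Tzero]
    · simp

/-- the matrix of `TF σ`. -/
def Mm (σ : Equiv.Perm (Fin 6)) : Matrix (Fin 4) (Fin 4) (ZMod 2) :=
  LinearMap.toMatrix' (Tlin σ)

lemma MmOne : Mm 1 = 1 := by
  unfold Mm
  rw [show Tlin 1 = LinearMap.id from LinearMap.ext fun x => Tone x]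
  exact LinearMap.toMatrix'_id

lemma MmMul (σ τ : Equiv.Perm (Fin 6)) : Mm (σ * τ) = Mm σ * Mm τ := by
  unfold Mm
  rw [show Tlin (σ * τ) = (Tlin σ).comp (Tlin τ) from LinearMap.ext fun x => Tmul σ τ x]
  exact LinearMap.toMatrix'_comp _ _

lemma MmApply (σ : Equiv.Perm (Fin 6)) (i j : Fin 4) :
    Mm σ i j = TF σ (Pi.single j 1) i := by
  unfold Mm
  rw [LinearMap.toMatrix'_apply]
  rfl

lemma entryLemma (m : Matrix (Fin 4) (Fin 4) (ZMod 2)) (i j : Fin 4) :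
    (mᵀ * JbarF2 * m) i j = B4 (fun k => m k i) (fun k => m k j) := by
  rw [← lemJ]
  simp [Matrix.mul_apply, dotProduct, mulVec, transpose_apply, Fin.sum_univ_four]
  ring

lemma singleB4 : ∀ i j : Fin 4, B4 (Pi.single i 1) (Pi.single j 1) = JbarF2 i j := by
  intro i j; fin_cases i <;> fin_cases j <;> decide

lemma MmSymp (σ : Equiv.Perm (Fin 6)) : (Mm σ)ᵀ * JbarF2 * Mm σ = JbarF2 := by
  ext i j
  rw [entryLemma]
  have hcol : ∀ l : Fin 4, (fun k => Mm σ k l) = TF σ (Pi.single l 1) := by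
    intro l; funext k; exact MmApply σ k l
  rw [hcol i, hcol j, Tform, singleB4]

-- ===== counting =====
def P2 : Type := {p : V4' × V4' // B4 p.1 p.2 = 1}
def Fib (a b : V4') : Type :=
  {q : V4' × V4' // B4 a q.1 = 0 ∧ B4 b q.1 = 0 ∧ B4 a q.2 = 0 ∧ B4 b q.2 = 0 ∧ B4 q.1 q.2 = 1}
instance : Fintype P2 := Subtype.fintype _
instance (a b : V4') : Fintype (Fib a b) := Subtype.fintype _

lemma cardP2 : Fintype.card P2 = 120 := by
  show Fintype.card {p : V4' × V4' // B4 p.1 p.2 = 1} = 120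
  decide

lemma cardFib : ∀ a b : V4', B4 a b = 1 → Fintype.card (Fib a b) = 6 := by
  show ∀ a b : V4', B4 a b = 1 → Fintype.card
    {q : V4' × V4' // B4 a q.1 = 0 ∧ B4 b q.1 = 0 ∧ B4 a q.2 = 0 ∧ B4 b q.2 = 0 ∧ B4 q.1 q.2 = 1} = 6
  decide

lemma cardSigma : Fintype.card (Σ p : P2, Fib p.1.1 p.1.2) = 720 := by
  rw [Fintype.card_sigma]
  have : ∀ p : P2, Fintype.card (Fib p.1.1 p.1.2) = 6 := fun p => cardFib p.1.1 p.1.2 p.2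
  rw [Finset.sum_congr rfl (fun p _ => this p), Finset.sum_const]
  simp [cardP2, Finset.card_univ]


-- ===== kernel triviality =====
lemma exPair : ∀ a b : Fin 6, a ≠ 4 → b ≠ 4 → a ≠ b →
    ∃ x : V4', ∀ v : Fin 6, EmF x v = if v = a ∨ v = b then 1 else 0 := by decide
lemma exB : ∀ a : Fin 6, a ≠ 4 → ∃ b : Fin 6, b ≠ 4 ∧ a ≠ b := by decide
lemma exTriple : ∀ a b : Fin 6, ∃ i1 i2 i3 : Fin 6, i1 ≠ i2 ∧ i1 ≠ i3 ∧ i2 ≠ i3 ∧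
    i1 ≠ a ∧ i1 ≠ b ∧ i2 ≠ a ∧ i2 ≠ b ∧ i3 ≠ a ∧ i3 ≠ b := by decide
lemma exRR : ∀ i : Fin 6, i ≠ 4 →
    ∃ r1 r2 : Fin 6, r1 ≠ r2 ∧ r1 ≠ 4 ∧ r2 ≠ 4 ∧ r1 ≠ i ∧ r2 ≠ i := by decide
lemma char2cancel : ∀ a b c : ZMod 2, a + c = b → a = b + c := by decide
lemma em4 : ∀ x : V4', EmF x 4 = 0 := by decide

lemma TFid (σ : Equiv.Perm (Fin 6)) (hT : ∀ x, TF σ x = x) : σ = 1 := by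
  set s := σ.symm with hs
  have key : ∀ (x : V4') (i : Fin 6), EmF x (s i) = EmF x i + EmF x (s 4) := by
    intro x i
    have h1 : RmF (fun i => EmF x (s i)) = x := hT x
    have h2 : EmF (RmF (fun i => EmF x (s i))) = EmF x := by rw [h1]
    have hsum : (∑ i, EmF x (s i)) = 0 := sumComp σ _ (sumEm x)
    rw [lemB _ hsum] at h2
    exact char2cancel _ _ _ (congrFun h2 i)
  have s4 : s 4 = 4 := by
    by_contra h4
    obtain ⟨b, hb4, hab⟩ := exB (s 4) h4
    obtain ⟨x, hx⟩ := exPair (s 4) b h4 hb4 hab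
    have hc : EmF x (s 4) = 1 := by rw [hx]; simp
    obtain ⟨i1, i2, i3, h12, h13, h23, h1a, h1b, h2a, h2b, h3a, h3b⟩ := exTriple (s 4) b
    have mem : ∀ i : Fin 6, i ≠ s 4 → i ≠ b → (s i = s 4 ∨ s i = b) := by
      intro i hia hib
      have k := key x i
      rw [hc, hx i, hx (s i)] at k
      simp only [hia, hib, or_self, if_false] at k
      by_contra hcon
      push_neg at hcon
      rw [if_neg (by simp [hcon.1, hcon.2])] at k
      exact (by decide : ¬ ((0 : ZMod 2) = 0 + 1)) k
    have m1 := mem i1 h1a h1b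
    have m2 := mem i2 h2a h2b
    have m3 := mem i3 h3a h3b
    have inj : Function.Injective s := σ.symm.injective
    rcases m1 with e1 | e1 <;> rcases m2 with e2 | e2 <;> rcases m3 with e3 | e3 <;>
      first
        | exact h12 (inj (e1.trans e2.symm))
        | exact h13 (inj (e1.trans e3.symm))
        | exact h23 (inj (e2.trans e3.symm))
  have hstep2 : ∀ i : Fin 6, s i = i := by
    intro i
    by_cases hi4 : i = 4
    · rw [hi4, s4]
    · obtain ⟨r1, r2, hr12, hr14, hr24, hr1i, hr2i⟩ := exRR i hi4
      have get : ∀ r : Fin 6, r ≠ 4 → r ≠ i → (s i = i ∨ s i = r) := by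
        intro r hr4 hri
        obtain ⟨x, hx⟩ := exPair i r hi4 hr4 (Ne.symm hri)
        have k := key x i
        rw [s4, em4, hx i, hx (s i)] at k
        rw [if_pos (Or.inl rfl)] at k
        by_contra hcon
        push_neg at hcon
        rw [if_neg (by simp [hcon.1, hcon.2])] at k
        exact (by decide : ¬ ((0 : ZMod 2) = 1 + 0)) k
      rcases get r1 hr14 hr1i with h | h
      · exact h
      · rcases get r2 hr24 hr2i with h' | h'
        · exact h'
        · exact (hr12 (h.symm.trans h')).elim
  apply Equiv.ext
  intro i
  have h5 := hstep2 (σ i)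
  rw [hs, Equiv.symm_apply_apply] at h5
  rw [Equiv.Perm.one_apply]
  exact h5.symm

-- ===== the homomorphism into Sp(4,F2) =====
def phi0 (σ : Equiv.Perm (Fin 6)) : GL (Fin 4) (ZMod 2) :=
  ⟨Mm σ, Mm σ⁻¹,
    by rw [← MmMul, mul_inv_cancel, MmOne],
    by rw [← MmMul, inv_mul_cancel, MmOne]⟩

def phiGL : Equiv.Perm (Fin 6) →* GL (Fin 4) (ZMod 2) where
  toFun := phi0
  map_one' := Units.ext MmOne
  map_mul' σ τ := Units.ext (MmMul σ τ)

lemma memSp (σ : Equiv.Perm (Fin 6)) : phiGL σ ∈ Sp4F2 := MmSymp σ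

def phi : Equiv.Perm (Fin 6) →* Sp4F2 := phiGL.codRestrict Sp4F2 memSp

lemma phiInj : Function.Injective phi := by
  rw [injective_iff_map_eq_one]
  intro σ h
  have h1 : phiGL σ = 1 := by
    have := congrArg (Subtype.val : Sp4F2 → GL (Fin 4) (ZMod 2)) h
    exact this
  have h2 : Mm σ = 1 := congrArg Units.val h1
  apply TFid
  intro x
  have h3 : Matrix.toLin' (Mm σ) = Tlin σ := Matrix.toLin'_toMatrix' (Tlin σ)
  have h4 : Matrix.toLin' (Mm σ) = LinearMap.id := by rw [h2]; exact Matrix.toLin'_one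
  have := congrFun (congrArg (fun f => (f : (V4' →ₗ[ZMod 2] V4')).toFun) (h3.symm.trans h4)) x
  exact this

-- ===== injection for the upper bound =====
def colOf (g : Sp4F2) (j : Fin 4) : V4' := fun k => ((g : GL (Fin 4) (ZMod 2)) : Matrix (Fin 4) (Fin 4) (ZMod 2)) k j

lemma gram (g : Sp4F2) (i j : Fin 4) : B4 (colOf g i) (colOf g j) = JbarF2 i j := by
  have hg : ((g : GL (Fin 4) (ZMod 2)) : Matrix (Fin 4) (Fin 4) (ZMod 2))ᵀ * JbarF2 *
      ((g : GL (Fin 4) (ZMod 2)) : Matrix (Fin 4) (Fin 4) (ZMod 2)) = JbarF2 := g.2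
  have h := entryLemma ((g : GL (Fin 4) (ZMod 2)) : Matrix (Fin 4) (Fin 4) (ZMod 2)) i j
  rw [hg] at h
  exact h.symm

def iota (g : Sp4F2) : Σ p : P2, Fib p.1.1 p.1.2 :=
  ⟨⟨(colOf g 0, colOf g 2), by
      show B4 (colOf g 0) (colOf g 2) = 1
      rw [_root_.gram]; decide⟩,
   ⟨(colOf g 1, colOf g 3), by
      refine ⟨?_, ?_, ?_, ?_, ?_⟩ <;> · show B4 _ _ = _; rw [_root_.gram]; decide⟩⟩

lemma iotaInj : Function.Injective iota := by
  intro g g' h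
  have h1 := congrArg (fun t => t.1.1.1) h
  have h2 := congrArg (fun t => t.1.1.2) h
  have h3 := congrArg (fun t => t.2.1.1) h
  have h4 := congrArg (fun t => t.2.1.2) h
  apply Subtype.ext
  apply Units.ext
  ext i j
  fin_cases j
  · exact congrFun h1 i
  · exact congrFun h3 i
  · exact congrFun h2 i
  · exact congrFun h4 i

/-- `Sp(4,𝔽₂)` is isomorphic to the symmetric group `S₆` on six letters. -/
theorem sp4F2_iso_symmGroupSix : Nonempty (Sp4F2 ≃* Equiv.Perm (Fin 6)) := by
  have cardLe : Nat.card Sp4F2 ≤ 720 := by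
    have h := Nat.card_le_card_of_injective iota iotaInj
    rwa [Nat.card_eq_fintype_card (α := Σ p : P2, Fib p.1.1 p.1.2), cardSigma] at h
  have cardPerm : Nat.card (Equiv.Perm (Fin 6)) = 720 := by
    rw [Nat.card_eq_fintype_card, Fintype.card_perm, Fintype.card_fin]
    rfl
  have cardGe : 720 ≤ Nat.card Sp4F2 := by
    calc 720 = Nat.card (Equiv.Perm (Fin 6)) := cardPerm.symm
      _ ≤ Nat.card Sp4F2 := Nat.card_le_card_of_injective phi phiInj
  have bij : Function.Bijective phi :=
    (Nat.bijective_iff_injective_and_card phi).mpr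
      ⟨phiInj, by rw [cardPerm]; exact (le_antisymm cardLe cardGe).symm⟩
  exact ⟨(MulEquiv.ofBijective phi bij).symm⟩
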